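/- Let N ≥ 2, m ≥ 1, and n ≥ N·m. Let I_1,…,I_N be N pairwise disjoint m-blocks in {1,…,n}, and let P be the symmetric Markov kernel on permutations of n letters given by P(σ,ξ) = (1/N) Σ_{k=1}^N ν[η = ξ | η = σ on I_k], where ν is the uniform measure. Then the lowest nonzero eigenvalue μ of 1 − P satisfies μ ≥ (N−2)/(N−1). -/

import Mathlib

open Finset

/-- The set of permutations agreeing with `σ` on the `m`-block `{a, a+1, …, a+m−1}`. -/
def blockFix (n m a : ℕ) (ha : a + m ≤ n) (σ : Equiv.Perm (Fin n)) :
    Finset (Equiv.Perm (Fin n)) :=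
  (univ : Finset (Equiv.Perm (Fin n))).filter (fun η =>
    ∀ t : Fin m, η ⟨a + t.val, by have := t.isLt; omega⟩ = σ ⟨a + t.val, by have := t.isLt; omega⟩)

namespace OSPG

variable {n m N : ℕ}

def bpos (a : Fin N → ℕ) (ha : ∀ k, a k + m ≤ n) (k : Fin N) (t : Fin m) : Fin n :=
  ⟨a k + t.val, by have := t.isLt; have := ha k; omega⟩

lemma mem_blockFix_iff (a : Fin N → ℕ) (ha : ∀ k, a k + m ≤ n) (k : Fin N)
    (σ η : Equiv.Perm (Fin n)) :
    η ∈ blockFix n m (a k) (ha k) σ ↔ ∀ t : Fin m, η (bpos a ha k t) = σ (bpos a ha k t) := by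
  simp [blockFix, bpos]

lemma self_mem_blockFix (a : Fin N → ℕ) (ha : ∀ k, a k + m ≤ n) (k : Fin N)
    (σ : Equiv.Perm (Fin n)) : σ ∈ blockFix n m (a k) (ha k) σ := by
  rw [mem_blockFix_iff]; intro t; rfl

lemma blockFix_symm (a : Fin N → ℕ) (ha : ∀ k, a k + m ≤ n) (k : Fin N)
    {σ η : Equiv.Perm (Fin n)} (h : η ∈ blockFix n m (a k) (ha k) σ) :
    σ ∈ blockFix n m (a k) (ha k) η := by
  rw [mem_blockFix_iff] at h ⊢; intro t; exact (h t).symm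

lemma blockFix_eq_of_mem (a : Fin N → ℕ) (ha : ∀ k, a k + m ≤ n) (k : Fin N)
    {σ η : Equiv.Perm (Fin n)} (h : η ∈ blockFix n m (a k) (ha k) σ) :
    blockFix n m (a k) (ha k) η = blockFix n m (a k) (ha k) σ := by
  rw [mem_blockFix_iff] at h
  ext ζ
  rw [mem_blockFix_iff, mem_blockFix_iff]
  exact ⟨fun h2 t => (h2 t).trans (h t), fun h2 t => (h2 t).trans (h t).symm⟩

lemma blockFix_card_pos (a : Fin N → ℕ) (ha : ∀ k, a k + m ≤ n) (k : Fin N)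
    (σ : Equiv.Perm (Fin n)) : 0 < (blockFix n m (a k) (ha k) σ).card :=
  card_pos.mpr ⟨σ, self_mem_blockFix a ha k σ⟩

noncomputable def Eop (a : Fin N → ℕ) (ha : ∀ k, a k + m ≤ n) (k : Fin N)
    (f : Equiv.Perm (Fin n) → ℝ) (σ : Equiv.Perm (Fin n)) : ℝ :=
  (∑ η ∈ blockFix n m (a k) (ha k) σ, f η) / ((blockFix n m (a k) (ha k) σ).card : ℝ)

lemma Eop_congr (a : Fin N → ℕ) (ha : ∀ k, a k + m ≤ n) (k : Fin N)
    (f : Equiv.Perm (Fin n) → ℝ) {σ η : Equiv.Perm (Fin n)}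
    (h : η ∈ blockFix n m (a k) (ha k) σ) :
    Eop a ha k f η = Eop a ha k f σ := by
  unfold Eop; rw [blockFix_eq_of_mem a ha k h]

/-- averaging over the class twice is the same as once -/
lemma Eop_Eop (a : Fin N → ℕ) (ha : ∀ k, a k + m ≤ n) (k : Fin N)
    (f : Equiv.Perm (Fin n) → ℝ) (σ : Equiv.Perm (Fin n)) :
    Eop a ha k (Eop a ha k f) σ = Eop a ha k f σ := by
  have hmem : ∀ η ∈ blockFix n m (a k) (ha k) σ,
      Eop a ha k f η = Eop a ha k f σ := fun η hη => Eop_congr a ha k f hη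
  have hc : ((blockFix n m (a k) (ha k) σ).card : ℝ) ≠ 0 := by
    exact_mod_cast (blockFix_card_pos a ha k σ).ne'
  calc Eop a ha k (Eop a ha k f) σ
      = (∑ η ∈ blockFix n m (a k) (ha k) σ, Eop a ha k f η) /
        ((blockFix n m (a k) (ha k) σ).card : ℝ) := rfl
    _ = (((blockFix n m (a k) (ha k) σ).card : ℝ) * Eop a ha k f σ) /
        ((blockFix n m (a k) (ha k) σ).card : ℝ) := by
        rw [sum_congr rfl hmem, sum_const, nsmul_eq_mul]
    _ = Eop a ha k f σ := mul_div_cancel_left₀ _ hc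

lemma sum_Eop (a : Fin N → ℕ) (ha : ∀ k, a k + m ≤ n) (k : Fin N)
    (f : Equiv.Perm (Fin n) → ℝ) :
    ∑ σ : Equiv.Perm (Fin n), Eop a ha k f σ = ∑ σ : Equiv.Perm (Fin n), f σ := by
  have h1 : ∀ σ : Equiv.Perm (Fin n), Eop a ha k f σ =
      ∑ η : Equiv.Perm (Fin n), if η ∈ blockFix n m (a k) (ha k) σ
        then f η / ((blockFix n m (a k) (ha k) η).card : ℝ) else 0 := by
    intro σ
    rw [sum_ite_mem, univ_inter]
    unfold Eop
    rw [sum_div]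
    exact sum_congr rfl fun η hη => by rw [blockFix_eq_of_mem a ha k hη]
  rw [sum_congr rfl fun σ _ => h1 σ, sum_comm]
  refine sum_congr rfl fun η _ => ?_
  have h2 : ∀ σ : Equiv.Perm (Fin n),
      (if η ∈ blockFix n m (a k) (ha k) σ then f η / ((blockFix n m (a k) (ha k) η).card : ℝ) else 0)
      = (if σ ∈ blockFix n m (a k) (ha k) η then f η / ((blockFix n m (a k) (ha k) η).card : ℝ) else 0) := by
    intro σ
    congr 1
    simp only [eq_iff_iff]
    exact ⟨blockFix_symm a ha k, blockFix_symm a ha k⟩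
  rw [sum_congr rfl fun σ _ => h2 σ, sum_ite_mem, univ_inter, sum_const, nsmul_eq_mul]
  have hc : ((blockFix n m (a k) (ha k) η).card : ℝ) ≠ 0 := by
    exact_mod_cast (blockFix_card_pos a ha k η).ne'
  field_simp

variable {n : ℕ}

/-- Extend a partial injection `φ : A → B` (bijective onto B) to a permutation,
sending the complement of `A` to the complement of `B`. -/
lemma exists_extend {A B : Finset (Fin n)} (φ : Fin n → Fin n)
    (hinj : Set.InjOn φ A) (himg : A.image φ = B) :
    ∃ π : Equiv.Perm (Fin n), (∀ x ∈ A, π x = φ x) ∧ (∀ x ∉ A, π x ∉ B) := by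
  classical
  have hcard : A.card = B.card := by rw [← himg, card_image_of_injOn hinj]
  have hcc : Fintype.card ↥(Aᶜ) = Fintype.card ↥(Bᶜ) := by
    simp [card_compl, hcard]
  let e2 : ↥(Aᶜ) ≃ ↥(Bᶜ) := Fintype.equivOfCardEq hcc
  let F : Fin n → Fin n := fun x =>
    if h : x ∈ A then φ x else (e2 ⟨x, by simpa using h⟩ : Fin n)
  have hφB : ∀ x ∈ A, φ x ∈ B := by
    intro x hx; rw [← himg]; exact mem_image_of_mem φ hx
  have he2B : ∀ (x) (h : x ∈ Aᶜ), (e2 ⟨x, h⟩ : Fin n) ∉ B := by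
    intro x h
    have h2 := (e2 ⟨x, h⟩).2
    rw [mem_compl] at h2
    exact h2
  have hFinj : Function.Injective F := by
    intro x y hxy
    by_cases hx : x ∈ A <;> by_cases hy : y ∈ A
    · exact hinj hx hy (by simpa [F, hx, hy] using hxy)
    · exfalso
      have h1 : F x ∈ B := by simpa [F, hx] using hφB x hx
      have h2 : F y ∉ B := by simpa [F, hy] using he2B y (by simpa using hy)
      rw [hxy] at h1; exact h2 h1
    · exfalso
      have h1 : F y ∈ B := by simpa [F, hy] using hφB y hy
      have h2 : F x ∉ B := by simpa [F, hx] using he2B x (by simpa using hx)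
      rw [← hxy] at h1; exact h2 h1
    · have : e2 ⟨x, by simpa using hx⟩ = e2 ⟨y, by simpa using hy⟩ := by
        apply Subtype.ext; simpa [F, hx, hy] using hxy
      have := e2.injective this
      simpa using congrArg Subtype.val this
  refine ⟨Equiv.ofBijective F (Finite.injective_iff_bijective.mp hFinj), ?_, ?_⟩
  · intro x hx; simp [Equiv.ofBijective_apply, F, hx]
  · intro x hx
    have : F x ∉ B := by simpa [F, hx] using he2B x (by simpa using hx)
    simpa [Equiv.ofBijective_apply, F, hx] using this

/-- Extend a partial injection of `A` onto itself to a permutation fixing `Aᶜ`. -/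
lemma exists_extend_id {A : Finset (Fin n)} (φ : Fin n → Fin n)
    (hinj : Set.InjOn φ A) (himg : A.image φ = A) :
    ∃ π : Equiv.Perm (Fin n), (∀ x ∈ A, π x = φ x) ∧ (∀ x ∉ A, π x = x) := by
  classical
  let F : Fin n → Fin n := fun x => if h : x ∈ A then φ x else x
  have hφB : ∀ x ∈ A, φ x ∈ A := by
    intro x hx
    have : φ x ∈ A.image φ := mem_image_of_mem φ hx
    rwa [himg] at this
  have hFinj : Function.Injective F := by
    intro x y hxy
    by_cases hx : x ∈ A <;> by_cases hy : y ∈ A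
    · exact hinj hx hy (by simpa [F, hx, hy] using hxy)
    · exfalso; apply hy
      have h1 : F x ∈ A := by simpa [F, hx] using hφB x hx
      rw [hxy] at h1; simpa [F, hy] using h1
    · exfalso; apply hx
      have h1 : F y ∈ A := by simpa [F, hy] using hφB y hy
      rw [← hxy] at h1; simpa [F, hx] using h1
    · simpa [F, hx, hy] using hxy
  refine ⟨Equiv.ofBijective F (Finite.injective_iff_bijective.mp hFinj), ?_, ?_⟩
  · intro x hx; simp [Equiv.ofBijective_apply, F, hx]
  · intro x hx; simp [Equiv.ofBijective_apply, F, hx]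


def posB (a : Fin N → ℕ) (ha : ∀ k, a k + m ≤ n) (k : Fin N) : Finset (Fin n) :=
  univ.image (bpos a ha k)
lemma bpos_injective (a : Fin N → ℕ) (ha : ∀ k, a k + m ≤ n) (k : Fin N) :
    Function.Injective (bpos a ha k) := by
  intro t t' h
  have : a k + t.val = a k + t'.val := congrArg Fin.val h
  exact Fin.ext (by omega)

lemma card_posB (a : Fin N → ℕ) (ha : ∀ k, a k + m ≤ n) (k : Fin N) :
    (posB a ha k).card = m := by
  rw [posB, card_image_of_injective _ (bpos_injective a ha k), card_univ, Fintype.card_fin]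

lemma posB_disjoint (a : Fin N → ℕ) (ha : ∀ k, a k + m ≤ n)
    (hdisj : ∀ k k' : Fin N, k ≠ k' → ∀ t t' : ℕ, t < m → t' < m → a k + t ≠ a k' + t')
    {j k : Fin N} (hjk : j ≠ k) : Disjoint (posB a ha j) (posB a ha k) := by
  rw [disjoint_left]
  intro p hpj hpk
  rw [posB, mem_image] at hpj hpk
  obtain ⟨t, _, ht⟩ := hpj
  obtain ⟨t', _, ht'⟩ := hpk
  have : a j + t.val = a k + t'.val := by
    rw [← ht'] at ht
    exact congrArg Fin.val ht
  exact hdisj j k hjk t.val t'.val t.isLt t'.isLt this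

def img (a : Fin N → ℕ) (ha : ∀ k, a k + m ≤ n) (k : Fin N) (σ : Equiv.Perm (Fin n)) :
    Finset (Fin n) := (posB a ha k).image σ

lemma card_img (a : Fin N → ℕ) (ha : ∀ k, a k + m ≤ n) (k : Fin N) (σ : Equiv.Perm (Fin n)) :
    (img a ha k σ).card = m := by
  rw [img, card_image_of_injective _ σ.injective, card_posB]

lemma img_mem_powersetCard (a : Fin N → ℕ) (ha : ∀ k, a k + m ≤ n) (k : Fin N)
    (σ : Equiv.Perm (Fin n)) : img a ha k σ ∈ powersetCard m (univ : Finset (Fin n)) := by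
  rw [mem_powersetCard]
  exact ⟨subset_univ _, card_img a ha k σ⟩

lemma img_disjoint (a : Fin N → ℕ) (ha : ∀ k, a k + m ≤ n)
    (hdisj : ∀ k k' : Fin N, k ≠ k' → ∀ t t' : ℕ, t < m → t' < m → a k + t ≠ a k' + t')
    {j k : Fin N} (hjk : j ≠ k) (σ : Equiv.Perm (Fin n)) :
    Disjoint (img a ha j σ) (img a ha k σ) := by
  rw [img, img]
  rw [disjoint_left]
  intro x hxj hxk
  rw [mem_image] at hxj hxk
  obtain ⟨p, hp, hpe⟩ := hxj
  obtain ⟨q, hq, hqe⟩ := hxk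
  have : p = q := σ.injective (hpe.trans hqe.symm)
  subst this
  exact (disjoint_left.mp (posB_disjoint a ha hdisj hjk)) hp hq

-- relabeling permutation
lemma exists_relabel (S T T' : Finset (Fin n)) (hST : Disjoint S T) (hST' : Disjoint S T')
    (hTT' : T.card = T'.card) :
    ∃ π : Equiv.Perm (Fin n), (∀ x ∈ S, π x = x) ∧ T.image (⇑π) = T' := by
  classical
  have hcc : Fintype.card ↥T = Fintype.card ↥T' := by simp [hTT']
  let e : ↥T ≃ ↥T' := Fintype.equivOfCardEq hcc
  let φ : Fin n → Fin n := fun x => if h : x ∈ T then (e ⟨x, h⟩ : Fin n) else x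
  have hφT : ∀ x ∈ T, φ x ∈ T' := by
    intro x hx
    simp only [φ, dif_pos hx]
    exact coe_mem _
  have hφid : ∀ x ∉ T, φ x = x := by
    intro x hx; simp [φ, hx]
  have himgT : T.image φ = T' := by
    apply Finset.eq_of_subset_of_card_le
    · intro y hy
      rw [mem_image] at hy
      obtain ⟨x, hx, he⟩ := hy
      rw [← he]; exact hφT x hx
    · rw [← hTT']
      apply card_le_card_of_injOn φ (fun x hx => mem_image_of_mem φ hx)
      intro x hx y hy hxy
      rw [mem_coe] at hx hy
      simp only [φ, dif_pos hx, dif_pos hy] at hxy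
      have := e.injective (Subtype.ext hxy)
      simpa using congrArg Subtype.val this
  have hinj : Set.InjOn φ ↑(S ∪ T) := by
    intro x hx y hy hxy
    simp only [coe_union, Set.mem_union, mem_coe] at hx hy
    by_cases hxT : x ∈ T <;> by_cases hyT : y ∈ T
    · simp only [φ, dif_pos hxT, dif_pos hyT] at hxy
      have := e.injective (Subtype.ext hxy)
      simpa using congrArg Subtype.val this
    · exfalso
      have h1 : φ x ∈ T' := hφT x hxT
      rw [hxy, hφid y hyT] at h1
      have hyS : y ∈ S := hy.resolve_right hyT
      exact (disjoint_left.mp hST') hyS h1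
    · exfalso
      have h1 : φ y ∈ T' := hφT y hyT
      rw [← hxy, hφid x hxT] at h1
      have hxS : x ∈ S := hx.resolve_right hxT
      exact (disjoint_left.mp hST' hxS h1)
    · rw [hφid x hxT, hφid y hyT] at hxy; exact hxy
  have himg : (S ∪ T).image φ = S ∪ T' := by
    rw [image_union, himgT]
    congr 1
    apply Finset.eq_of_subset_of_card_le
    · intro y hy
      rw [mem_image] at hy
      obtain ⟨x, hx, he⟩ := hy
      rw [← he, hφid x (disjoint_left.mp hST hx)]; exact hx
    · rw [card_image_of_injOn]
      intro x hx y hy hxy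
      rw [hφid x (disjoint_left.mp hST (mem_coe.mp hx)),
        hφid y (disjoint_left.mp hST (mem_coe.mp hy))] at hxy
      exact hxy
  obtain ⟨π, hπA, _⟩ := exists_extend φ hinj himg
  refine ⟨π, ?_, ?_⟩
  · intro x hx
    rw [hπA x (mem_union_left _ hx), hφid x (disjoint_left.mp hST hx)]
  · rw [← himgT]
    apply image_congr
    intro x hx
    exact hπA x (mem_union_right _ hx)

lemma mem_blockFix_iff' (a : Fin N → ℕ) (ha : ∀ k, a k + m ≤ n) (k : Fin N)
    (σ η : Equiv.Perm (Fin n)) :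
    η ∈ blockFix n m (a k) (ha k) σ ↔ ∀ p ∈ posB a ha k, η p = σ p := by
  rw [mem_blockFix_iff]
  constructor
  · intro h p hp
    rw [posB, mem_image] at hp
    obtain ⟨t, _, rfl⟩ := hp
    exact h t
  · intro h t
    exact h _ (by rw [posB, mem_image]; exact ⟨t, mem_univ t, rfl⟩)

lemma img_eq_of_mem (a : Fin N → ℕ) (ha : ∀ k, a k + m ≤ n) (k : Fin N)
    {σ η : Equiv.Perm (Fin n)} (h : η ∈ blockFix n m (a k) (ha k) σ) :
    img a ha k η = img a ha k σ := by
  rw [mem_blockFix_iff'] at h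
  exact image_congr fun p hp => h p hp

lemma img_trans (a : Fin N → ℕ) (ha : ∀ k, a k + m ≤ n) (k : Fin N)
    (σ π : Equiv.Perm (Fin n)) :
    img a ha k (σ.trans π) = (img a ha k σ).image (⇑π) := by
  rw [img, img, image_image]
  rfl

/-- reordering permutation matching two permutations with the same block image -/
lemma exists_reorder (a : Fin N → ℕ) (ha : ∀ k, a k + m ≤ n) (j : Fin N)
    {σ σ' : Equiv.Perm (Fin n)} (h : img a ha j σ = img a ha j σ') :
    ∃ ρ : Equiv.Perm (Fin n),
      (∀ p ∈ posB a ha j, ρ p ∈ posB a ha j ∧ σ (ρ p) = σ' p) ∧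
      (∀ p ∉ posB a ha j, ρ p = p) := by
  classical
  set φ : Fin n → Fin n := fun p => σ.symm (σ' p) with hφ
  have hinj : Set.InjOn φ ↑(posB a ha j) := by
    intro x _ y _ hxy
    exact σ'.injective (σ.symm.injective hxy)
  have himg : (posB a ha j).image φ = posB a ha j := by
    have h1 : (posB a ha j).image φ = (img a ha j σ').image (⇑σ.symm) := by
      rw [img, image_image]; rfl
    rw [h1, ← h, img, image_image]
    have : ∀ p ∈ posB a ha j, (⇑σ.symm ∘ ⇑σ) p = p := by
      intro p _; simp
    rw [image_congr this]
    exact image_id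
  obtain ⟨ρ, hρ1, hρ2⟩ := exists_extend_id φ hinj himg
  refine ⟨ρ, ?_, hρ2⟩
  intro p hp
  constructor
  · rw [hρ1 p hp]
    have : φ p ∈ (posB a ha j).image φ := mem_image_of_mem φ hp
    rwa [himg] at this
  · rw [hρ1 p hp, hφ]
    simp

/-- For `g` measurable w.r.t. block `k`, the average of `g` over the `j`-block class of `σ`
only depends on the set `img j σ` (`j ≠ k`). -/
lemma Eop_img_invariant (a : Fin N → ℕ) (ha : ∀ k, a k + m ≤ n)
    (hdisj : ∀ k k' : Fin N, k ≠ k' → ∀ t t' : ℕ, t < m → t' < m → a k + t ≠ a k' + t')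
    {j k : Fin N} (hjk : j ≠ k) (g : Equiv.Perm (Fin n) → ℝ)
    (hg : ∀ ⦃σ η⦄, η ∈ blockFix n m (a k) (ha k) σ → g η = g σ)
    {σ σ' : Equiv.Perm (Fin n)} (h : img a ha j σ = img a ha j σ') :
    Eop a ha j g σ = Eop a ha j g σ' := by
  classical
  obtain ⟨ρ, hρ1, hρ2⟩ := exists_reorder a ha j h
  have hposB : (posB a ha j).image (⇑ρ) = posB a ha j := by
    apply Finset.eq_of_subset_of_card_le
    · intro p hp
      rw [mem_image] at hp
      obtain ⟨q, hq, rfl⟩ := hp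
      exact (hρ1 q hq).1
    · rw [card_image_of_injective _ ρ.injective]
  have hinvmem : ∀ p ∈ posB a ha j, ρ.symm p ∈ posB a ha j := by
    intro p hp
    rw [← hposB, mem_image] at hp
    obtain ⟨q, hq, rfl⟩ := hp
    simpa using hq
  -- forward map η ↦ η ∘ ρ  (as Equiv: ρ.trans η)
  have hfwd : ∀ η ∈ blockFix n m (a j) (ha j) σ,
      ρ.trans η ∈ blockFix n m (a j) (ha j) σ' := by
    intro η hη
    rw [mem_blockFix_iff'] at hη ⊢
    intro p hp
    have h1 := (hρ1 p hp)
    simp only [Equiv.trans_apply]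
    rw [hη (ρ p) h1.1, h1.2]
  have hbwd : ∀ ζ ∈ blockFix n m (a j) (ha j) σ',
      ρ.symm.trans ζ ∈ blockFix n m (a j) (ha j) σ := by
    intro ζ hζ
    rw [mem_blockFix_iff'] at hζ ⊢
    intro p hp
    have hq : ρ.symm p ∈ posB a ha j := hinvmem p hp
    simp only [Equiv.trans_apply]
    rw [hζ (ρ.symm p) hq, ← (hρ1 (ρ.symm p) hq).2]
    simp
  have hgval : ∀ η ∈ blockFix n m (a j) (ha j) σ, g η = g (ρ.trans η) := by
    intro η hη
    have : ρ.trans η ∈ blockFix n m (a k) (ha k) η := by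
      rw [mem_blockFix_iff']
      intro p hp
      have hpj : p ∉ posB a ha j :=
        disjoint_right.mp (posB_disjoint a ha hdisj hjk) hp
      simp only [Equiv.trans_apply, hρ2 p hpj]
    exact (hg this).symm
  have hli : ∀ η ∈ blockFix n m (a j) (ha j) σ, ρ.symm.trans (ρ.trans η) = η := by
    intro η _; ext x; simp
  have hri : ∀ ζ ∈ blockFix n m (a j) (ha j) σ', ρ.trans (ρ.symm.trans ζ) = ζ := by
    intro ζ _; ext x; simp
  have hsum : ∑ η ∈ blockFix n m (a j) (ha j) σ, g η
      = ∑ ζ ∈ blockFix n m (a j) (ha j) σ', g ζ :=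
    sum_nbij' (fun η => ρ.trans η) (fun ζ => ρ.symm.trans ζ) hfwd hbwd hli hri hgval
  have hcard : (blockFix n m (a j) (ha j) σ).card = (blockFix n m (a j) (ha j) σ').card :=
    card_nbij' (fun η => ρ.trans η) (fun ζ => ρ.symm.trans ζ) hfwd hbwd hli hri
  rw [Eop, Eop, hsum, hcard]

lemma mem_powersetCard_compl_iff {S T : Finset (Fin n)} :
    T ∈ powersetCard m Sᶜ ↔ T.card = m ∧ Disjoint T S := by
  rw [mem_powersetCard]
  constructor
  · rintro ⟨h1, h2⟩
    exact ⟨h2, le_compl_iff_disjoint_right.mp h1⟩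
  · rintro ⟨h1, h2⟩
    exact ⟨le_compl_iff_disjoint_right.mpr h2, h1⟩

lemma exists_img_eq (a : Fin N → ℕ) (ha : ∀ k, a k + m ≤ n) (j : Fin N)
    {S : Finset (Fin n)} (hS : S ∈ powersetCard m (univ : Finset (Fin n))) :
    ∃ σ : Equiv.Perm (Fin n), img a ha j σ = S := by
  obtain ⟨π, _, hπ2⟩ := exists_relabel ∅ (posB a ha j) S (disjoint_empty_left _)
    (disjoint_empty_left _) (by rw [card_posB, (mem_powersetCard.mp hS).2])
  exact ⟨π, hπ2⟩

/-- permutations with a fixed `j`-block image `S`, as a fiber -/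
lemma sigma_fiber_card_const (a : Fin N → ℕ) (ha : ∀ k, a k + m ≤ n) (j : Fin N)
    {S S' : Finset (Fin n)} (hS : S ∈ powersetCard m (univ : Finset (Fin n)))
    (hS' : S' ∈ powersetCard m (univ : Finset (Fin n))) :
    ((univ : Finset (Equiv.Perm (Fin n))).filter (fun σ => img a ha j σ = S)).card =
    ((univ : Finset (Equiv.Perm (Fin n))).filter (fun σ => img a ha j σ = S')).card := by
  classical
  obtain ⟨π, _, hπ2⟩ := exists_relabel ∅ S S' (disjoint_empty_left _) (disjoint_empty_left _)
    (by rw [(mem_powersetCard.mp hS).2, (mem_powersetCard.mp hS').2])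
  refine card_nbij' (fun σ => σ.trans π) (fun σ => σ.trans π.symm) ?_ ?_ ?_ ?_
  · intro σ hσ
    rw [Finset.mem_coe, mem_filter] at hσ ⊢
    refine ⟨mem_univ _, ?_⟩
    rw [img_trans, hσ.2, hπ2]
  · intro σ hσ
    rw [Finset.mem_coe, mem_filter] at hσ ⊢
    refine ⟨mem_univ _, ?_⟩
    rw [img_trans, hσ.2, ← hπ2, image_image]
    have : ∀ p ∈ S, (⇑π.symm ∘ ⇑π) p = p := by intro p _; simp
    rw [image_congr this]
    exact image_id
  · intro σ _; ext x; simp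
  · intro σ _; ext x; simp

/-- sum over all permutations of a function of the `j`-block image -/
lemma sum_perm_img (a : Fin N → ℕ) (ha : ∀ k, a k + m ≤ n) (j : Fin N)
    (u : Finset (Fin n) → ℝ) :
    ∃ c : ℕ, 0 < c ∧
      ∑ σ : Equiv.Perm (Fin n), u (img a ha j σ) =
        (c : ℝ) * ∑ S ∈ powersetCard m (univ : Finset (Fin n)), u S := by
  classical
  have hmn' : m ≤ n := by
    have := card_posB a ha j
    calc m = (posB a ha j).card := (card_posB a ha j).symm
    _ ≤ (univ : Finset (Fin n)).card := card_le_card (subset_univ _)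
    _ = n := by rw [card_univ, Fintype.card_fin]
  have hne : (powersetCard m (univ : Finset (Fin n))).Nonempty := by
    apply powersetCard_nonempty.mpr
    rw [card_univ, Fintype.card_fin]; exact hmn'
  obtain ⟨S₀, hS₀⟩ := hne
  set c := ((univ : Finset (Equiv.Perm (Fin n))).filter (fun σ => img a ha j σ = S₀)).card with hc
  refine ⟨c, ?_, ?_⟩
  · rw [hc, card_pos]
    obtain ⟨σ, hσ⟩ := exists_img_eq a ha j hS₀
    exact ⟨σ, by rw [mem_filter]; exact ⟨mem_univ _, hσ⟩⟩
  · have hmaps : ∀ σ : Equiv.Perm (Fin n), σ ∈ (univ : Finset (Equiv.Perm (Fin n))) →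
        img a ha j σ ∈ powersetCard m (univ : Finset (Fin n)) :=
      fun σ _ => img_mem_powersetCard a ha j σ
    rw [← sum_fiberwise_of_maps_to hmaps (fun σ => u (img a ha j σ))]
    rw [mul_sum]
    refine sum_congr rfl fun S hS => ?_
    have : ∀ σ ∈ (univ : Finset (Equiv.Perm (Fin n))).filter (fun σ => img a ha j σ = S),
        u (img a ha j σ) = u S := by
      intro σ hσ
      rw [mem_filter] at hσ
      rw [hσ.2]
    rw [sum_congr rfl this, sum_const, nsmul_eq_mul]
    congr 1
    exact_mod_cast sigma_fiber_card_const a ha j hS hS₀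

/-- THE key conditional-expectation computation: averaging a function of the `k`-block
image over the `j`-block class of `σ` gives the uniform average over `m`-sets disjoint
from `img j σ`. -/
lemma Eop_of_img_fn (a : Fin N → ℕ) (ha : ∀ k, a k + m ≤ n) (hN : 2 ≤ N) (hmn : N * m ≤ n)
    (hdisj : ∀ k k' : Fin N, k ≠ k' → ∀ t t' : ℕ, t < m → t' < m → a k + t ≠ a k' + t')
    {j k : Fin N} (hjk : j ≠ k) (u : Finset (Fin n) → ℝ) (σ : Equiv.Perm (Fin n)) :
    Eop a ha j (fun η => u (img a ha k η)) σ =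
      (∑ T ∈ powersetCard m ((img a ha j σ)ᶜ), u T) /
      ((powersetCard m ((img a ha j σ)ᶜ)).card : ℝ) := by
  classical
  set S := img a ha j σ with hSdef
  have hScard : S.card = m := card_img a ha j σ
  have hSccard : (Sᶜ).card = n - m := by
    rw [card_compl, hScard, Fintype.card_fin]
  have hm2n : 2 * m ≤ n := le_trans (Nat.mul_le_mul_right m hN) hmn
  have hne : (powersetCard m (Sᶜ)).Nonempty := by
    apply powersetCard_nonempty.mpr
    rw [hSccard]; omega
  have hmaps : ∀ η ∈ blockFix n m (a j) (ha j) σ, img a ha k η ∈ powersetCard m (Sᶜ) := by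
    intro η hη
    rw [mem_powersetCard_compl_iff]
    refine ⟨card_img a ha k η, ?_⟩
    have h1 : Disjoint (img a ha k η) (img a ha j η) :=
      (img_disjoint a ha hdisj hjk η).symm
    rwa [img_eq_of_mem a ha j hη] at h1
  -- each fiber is nonempty
  have hfne : ∀ T ∈ powersetCard m (Sᶜ),
      ∃ η ∈ blockFix n m (a j) (ha j) σ, img a ha k η = T := by
    intro T hT
    rw [mem_powersetCard_compl_iff] at hT
    obtain ⟨π, hπ1, hπ2⟩ := exists_relabel S (img a ha k σ) T
      ((img_disjoint a ha hdisj hjk σ).symm).symm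
      hT.2.symm (by rw [card_img, hT.1])
    refine ⟨σ.trans π, ?_, ?_⟩
    · rw [mem_blockFix_iff']
      intro p hp
      simp only [Equiv.trans_apply]
      exact hπ1 (σ p) (mem_image_of_mem σ hp)
    · rw [img_trans, hπ2]
  -- fibers have constant size
  have hfc : ∀ T ∈ powersetCard m (Sᶜ), ∀ T' ∈ powersetCard m (Sᶜ),
      ((blockFix n m (a j) (ha j) σ).filter (fun η => img a ha k η = T)).card =
      ((blockFix n m (a j) (ha j) σ).filter (fun η => img a ha k η = T')).card := by
    intro T hT T' hT'
    rw [mem_powersetCard_compl_iff] at hT hT'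
    obtain ⟨π, hπ1, hπ2⟩ := exists_relabel S T T' hT.2.symm hT'.2.symm
      (by rw [hT.1, hT'.1])
    have hπs1 : ∀ x ∈ S, π.symm x = x := by
      intro x hx
      conv_lhs => rw [← hπ1 x hx]
      simp
    have hπs2 : T'.image (⇑π.symm) = T := by
      rw [← hπ2, image_image]
      have : ∀ p ∈ T, (⇑π.symm ∘ ⇑π) p = p := by intro p _; simp
      rw [image_congr this]
      exact image_id
    refine card_nbij' (fun η => η.trans π) (fun η => η.trans π.symm) ?_ ?_ ?_ ?_
    · intro η hη
      rw [Finset.mem_coe, mem_filter] at hη ⊢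
      constructor
      · rw [mem_blockFix_iff'] at hη ⊢
        intro p hp
        simp only [Equiv.trans_apply]
        rw [hη.1 p hp]
        exact hπ1 (σ p) (mem_image_of_mem σ hp)
      · rw [img_trans, hη.2, hπ2]
    · intro η hη
      rw [Finset.mem_coe, mem_filter] at hη ⊢
      constructor
      · rw [mem_blockFix_iff'] at hη ⊢
        intro p hp
        simp only [Equiv.trans_apply]
        rw [hη.1 p hp]
        exact hπs1 (σ p) (mem_image_of_mem σ hp)
      · rw [img_trans, hη.2, hπs2]
    · intro η _; ext x; simp
    · intro η _; ext x; simp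
  obtain ⟨T₀, hT₀⟩ := hne
  set c := ((blockFix n m (a j) (ha j) σ).filter (fun η => img a ha k η = T₀)).card with hcdef
  have hcpos : 0 < c := by
    rw [hcdef, card_pos]
    obtain ⟨η, hη1, hη2⟩ := hfne T₀ hT₀
    exact ⟨η, by rw [mem_filter]; exact ⟨hη1, hη2⟩⟩
  have hnum : ∑ η ∈ blockFix n m (a j) (ha j) σ, u (img a ha k η)
      = (c : ℝ) * ∑ T ∈ powersetCard m (Sᶜ), u T := by
    rw [← sum_fiberwise_of_maps_to hmaps (fun η => u (img a ha k η)), mul_sum]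
    refine sum_congr rfl fun T hT => ?_
    have h1 : ∀ η ∈ (blockFix n m (a j) (ha j) σ).filter (fun η => img a ha k η = T),
        u (img a ha k η) = u T := by
      intro η hη
      rw [mem_filter] at hη
      rw [hη.2]
    rw [sum_congr rfl h1, sum_const, nsmul_eq_mul]
    congr 1
    exact_mod_cast hfc T hT T₀ hT₀
  have hden : ((blockFix n m (a j) (ha j) σ).card : ℝ)
      = (c : ℝ) * ((powersetCard m (Sᶜ)).card : ℝ) := by
    rw [card_eq_sum_card_fiberwise hmaps]
    push_cast
    rw [sum_congr rfl (fun T hT => ?_), sum_const, nsmul_eq_mul, mul_comm]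
    exact_mod_cast hfc T hT T₀ hT₀
  have hc0 : (c : ℝ) ≠ 0 := by exact_mod_cast hcpos.ne'
  rw [Eop]
  rw [hnum, hden, mul_div_mul_left _ _ hc0]

/-! ### Pure set combinatorics: the Kneser-type spectral argument -/

lemma sum_neg_one_pow_real {α : Type*} [DecidableEq α] (x : Finset α) :
    (∑ Y ∈ x.powerset, (-1 : ℝ) ^ Y.card) = if x = ∅ then 1 else 0 := by
  have h := Finset.sum_powerset_neg_one_pow_card (x := x)
  have : ((∑ Y ∈ x.powerset, (-1 : ℤ) ^ Y.card : ℤ) : ℝ)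
      = ∑ Y ∈ x.powerset, (-1 : ℝ) ^ Y.card := by push_cast; rfl
  rw [← this, h]
  split_ifs <;> simp

lemma pcard_compl_eq_filter (S : Finset (Fin n)) :
    powersetCard m Sᶜ = (powersetCard m (univ : Finset (Fin n))).filter
      (fun T => Disjoint T S) := by
  ext T
  rw [mem_filter, mem_powersetCard_compl_iff, mem_powersetCard]
  constructor
  · rintro ⟨h1, h2⟩; exact ⟨⟨subset_univ _, h1⟩, h2⟩
  · rintro ⟨⟨_, h1⟩, h2⟩; exact ⟨h1, h2⟩

/-- number of `m`-sets containing `Z` and disjoint from the `m`-set `T` -/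
lemma count_supersets_disjoint {Z T : Finset (Fin n)} (hZm : Z.card ≤ m)
    (hT : T.card = m) (hZT : Disjoint Z T) :
    ((powersetCard m (univ : Finset (Fin n))).filter
      (fun S => Z ⊆ S ∧ Disjoint T S)).card = Nat.choose (n - m - Z.card) (m - Z.card) := by
  classical
  have key : ((powersetCard m (univ : Finset (Fin n))).filter
      (fun S => Z ⊆ S ∧ Disjoint T S)).card
      = (powersetCard (m - Z.card) ((Z ∪ T)ᶜ)).card := by
    refine card_nbij' (fun S => S \ Z) (fun S' => S' ∪ Z) ?_ ?_ ?_ ?_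
    · intro S hS
      rw [Finset.mem_coe, mem_filter, mem_powersetCard] at hS
      obtain ⟨⟨_, hScard⟩, hZS, hTS⟩ := hS
      rw [Finset.mem_coe, mem_powersetCard]
      constructor
      · intro x hx
        rw [mem_sdiff] at hx
        rw [mem_compl, mem_union]
        push_neg
        exact ⟨hx.2, disjoint_right.mp hTS hx.1⟩
      · rw [card_sdiff_of_subset hZS, hScard]
    · intro S' hS'
      rw [Finset.mem_coe, mem_powersetCard] at hS'
      obtain ⟨hsub, hcard⟩ := hS'
      have hdisjS'Z : Disjoint S' Z := by
        rw [disjoint_left]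
        intro x hx
        have := hsub hx
        rw [mem_compl, mem_union] at this
        push_neg at this
        exact fun h => this.1 h
      have hdisjS'T : Disjoint S' T := by
        rw [disjoint_left]
        intro x hx
        have := hsub hx
        rw [mem_compl, mem_union] at this
        push_neg at this
        exact fun h => this.2 h
      rw [Finset.mem_coe, mem_filter, mem_powersetCard]
      refine ⟨⟨subset_univ _, ?_⟩, subset_union_right, ?_⟩
      · rw [card_union_of_disjoint hdisjS'Z, hcard]
        omega
      · rw [disjoint_right]
        intro x hx
        simp only [mem_union] at hx
        rcases hx with h | h
        · exact disjoint_left.mp hdisjS'T h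
        · exact disjoint_left.mp hZT h
    · intro S hS
      rw [Finset.mem_coe, mem_filter] at hS
      exact sdiff_union_of_subset hS.2.1
    · intro S' hS'
      rw [Finset.mem_coe, mem_powersetCard] at hS'
      have hdisjS'Z : Disjoint S' Z := by
        rw [disjoint_left]
        intro x hx
        have := hS'.1 hx
        rw [mem_compl, mem_union] at this
        push_neg at this
        exact fun h => this.1 h
      show (S' ∪ Z) \ Z = S'
      rw [union_sdiff_cancel_right hdisjS'Z]
  rw [key, card_powersetCard]
  congr 1
  rw [card_compl, card_union_of_disjoint hZT, Fintype.card_fin, hT]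
  omega

lemma count_supersets_zero {Z T : Finset (Fin n)} (h : ¬ Disjoint Z T) :
    ((powersetCard m (univ : Finset (Fin n))).filter
      (fun S => Z ⊆ S ∧ Disjoint T S)).card = 0 := by
  rw [card_eq_zero, filter_eq_empty_iff]
  intro S hS
  rintro ⟨hZS, hTS⟩
  exact h (disjoint_of_subset_left hZS hTS.symm)

lemma exists_min_support {α : Type*} [Fintype α] [DecidableEq α]
    {F : Finset α → ℝ} (hF : ∃ Z, F Z ≠ 0) :
    ∃ Z₀, F Z₀ ≠ 0 ∧ ∀ Y : Finset α, Y.card < Z₀.card → F Y = 0 := by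
  classical
  obtain ⟨Z, hZ⟩ := hF
  have hne : ((univ : Finset (Finset α)).filter (fun Z => F Z ≠ 0)).Nonempty :=
    ⟨Z, by rw [mem_filter]; exact ⟨mem_univ _, hZ⟩⟩
  obtain ⟨Z₀, hZ₀mem, hZ₀min⟩ := exists_min_image _ Finset.card hne
  rw [mem_filter] at hZ₀mem
  refine ⟨Z₀, hZ₀mem.2, ?_⟩
  intro Y hY
  by_contra hY0
  have := hZ₀min Y (by rw [mem_filter]; exact ⟨mem_univ _, hY0⟩)
  omega

variable (m) in
/-- `∑_{S ⊇ Z, |S| = m} u S` -/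
noncomputable def ew (u : Finset (Fin n) → ℝ) (Z : Finset (Fin n)) : ℝ :=
  ∑ S ∈ (powersetCard m (univ : Finset (Fin n))).filter (fun S => Z ⊆ S), u S

variable (m) in
/-- `∑_{T ⊥ Z, |T| = m} u T` -/
noncomputable def ev (u : Finset (Fin n) → ℝ) (Z : Finset (Fin n)) : ℝ :=
  ∑ T ∈ (powersetCard m (univ : Finset (Fin n))).filter (fun T => Disjoint T Z), u T

lemma ew_empty (u : Finset (Fin n) → ℝ) :
    ew m u ∅ = ∑ S ∈ powersetCard m (univ : Finset (Fin n)), u S := by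
  rw [ew]
  congr 1
  rw [filter_eq_self]
  intro S _
  exact empty_subset S

lemma ew_zero_of_lt (u : Finset (Fin n) → ℝ) {Z : Finset (Fin n)} (hZ : m < Z.card) :
    ew m u Z = 0 := by
  rw [ew, filter_false_of_mem, sum_empty]
  intro S hS
  rw [mem_powersetCard] at hS
  intro hsub
  have := card_le_card hsub
  omega

lemma ew_level_m (u : Finset (Fin n) → ℝ) {S : Finset (Fin n)}
    (hS : S ∈ powersetCard m (univ : Finset (Fin n))) : ew m u S = u S := by
  rw [ew]
  have : (powersetCard m (univ : Finset (Fin n))).filter (fun S' => S ⊆ S') = {S} := by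
    ext S'
    rw [mem_filter, mem_singleton, mem_powersetCard]
    constructor
    · rintro ⟨⟨_, hc⟩, hsub⟩
      exact (eq_of_subset_of_card_le hsub (by rw [hc, (mem_powersetCard.mp hS).2])).symm
    · rintro rfl
      exact ⟨⟨subset_univ _, (mem_powersetCard.mp hS).2⟩, subset_refl _⟩
  rw [this, sum_singleton]

/-- Möbius inversion: the disjoint-sum is the alternating sum of superset-sums. -/
lemma ev_eq_moebius (u : Finset (Fin n) → ℝ) (Z : Finset (Fin n)) :
    ev m u Z = ∑ Y ∈ Z.powerset, (-1 : ℝ) ^ Y.card * ew m u Y := by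
  classical
  have step1 : ∀ Y : Finset (Fin n), (-1 : ℝ) ^ Y.card * ew m u Y
      = ∑ S ∈ powersetCard m (univ : Finset (Fin n)),
          (if Y ⊆ S then (-1 : ℝ) ^ Y.card * u S else 0) := by
    intro Y
    rw [ew, mul_sum, sum_filter]
  rw [sum_congr rfl fun Y _ => step1 Y, sum_comm]
  rw [ev, sum_filter]
  refine sum_congr rfl fun S _ => ?_
  have h1 : ∀ Y ∈ Z.powerset, (if Y ⊆ S then (-1 : ℝ) ^ Y.card * u S else 0)
      = (if Y ∈ (Z ∩ S).powerset then (-1 : ℝ) ^ Y.card else 0) * u S := by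
    intro Y hY
    rw [mem_powerset] at hY
    by_cases h : Y ⊆ S
    · rw [if_pos h, if_pos (mem_powerset.mpr (subset_inter hY h))]
    · rw [if_neg h, if_neg (fun hc => h (subset_inter_iff.mp (mem_powerset.mp hc)).2),
        zero_mul]
  rw [sum_congr rfl h1, ← sum_mul, sum_ite_mem]
  have h2 : Z.powerset ∩ (Z ∩ S).powerset = (Z ∩ S).powerset := by
    rw [inter_eq_right]
    exact powerset_mono.mpr inter_subset_left
  rw [h2, sum_neg_one_pow_real]
  by_cases hd : Disjoint S Z
  · rw [if_pos hd, if_pos (by rw [inter_comm]; exact disjoint_iff_inter_eq_empty.mp hd), one_mul]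
  · rw [if_neg hd, if_neg (fun hc => hd (by rw [disjoint_iff_inter_eq_empty, inter_comm, hc])), zero_mul]

/-- collapse of the Möbius sum at a minimal-support set -/
lemma moebius_collapse {G : Finset (Fin n) → ℝ} {Z₀ : Finset (Fin n)}
    (hmin : ∀ Y : Finset (Fin n), Y.card < Z₀.card → G Y = 0) :
    ∑ Y ∈ Z₀.powerset, (-1 : ℝ) ^ Y.card * G Y = (-1 : ℝ) ^ Z₀.card * G Z₀ := by
  refine sum_eq_single_of_mem Z₀ (mem_powerset_self _) ?_
  intro Y hY hYne
  rw [mem_powerset] at hY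
  have : Y.card < Z₀.card := card_lt_card (Finset.ssubset_iff_subset_ne.mpr ⟨hY, hYne⟩)
  rw [hmin Y this, mul_zero]

set_option maxHeartbeats 1600000 in
theorem endgame {n m N : ℕ} (hN : 2 ≤ N) (hm : 1 ≤ m) (hmn : N * m ≤ n)
    (u : Fin N → Finset (Fin n) → ℝ) (c : ℝ) (hc : 1 < ((N : ℝ) - 1) * c)
    (hmaster : ∀ j : Fin N, ∀ S ∈ powersetCard m (univ : Finset (Fin n)),
      c * (Nat.choose (n - m) m : ℝ) * u j S =
        ∑ k ∈ (univ : Finset (Fin N)).erase j, ∑ T ∈ powersetCard m Sᶜ, u k T)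
    (hmean : ∀ j, ∑ S ∈ powersetCard m (univ : Finset (Fin n)), u j S = 0)
    (hnt : ∃ j, ∃ S ∈ powersetCard m (univ : Finset (Fin n)), u j S ≠ 0) : False := by
  classical
  have h2m : 2 * m ≤ n := le_trans (Nat.mul_le_mul_right m hN) hmn
  have hNm : (N - 1) * m ≤ n - m := by
    have h1 : (N - 1) * m + 1 * m = N * m := by
      rw [← Nat.add_mul]; congr 1; omega
    omega
  have hN1R : (1 : ℝ) ≤ (N : ℝ) - 1 := by
    have : (2 : ℝ) ≤ (N : ℝ) := by exact_mod_cast hN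
    linarith
  have hcpos : 0 < c := by nlinarith
  set e : ℕ → ℕ := fun i => Nat.choose (n - m - i) (m - i) with he
  have he0 : e 0 = Nat.choose (n - m) m := by simp [he]
  have hepos : ∀ i, i ≤ m → 0 < e i := by
    intro i hi
    exact Nat.choose_pos (by omega)
  have hestep : ∀ i, i + 1 ≤ m → e (i + 1) ≤ e i := by
    intro i hi
    have h1 : m - i = (m - (i + 1)) + 1 := by omega
    have h2 : n - m - i = (n - m - (i + 1)) + 1 := by omega
    show Nat.choose (n - m - (i + 1)) (m - (i + 1)) ≤ Nat.choose (n - m - i) (m - i)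
    rw [h1, h2, Nat.choose_succ_succ]
    exact Nat.le_add_right _ _
  have heanti : ∀ i j, i ≤ j → j ≤ m → e j ≤ e i := by
    have key : ∀ d i, i + d ≤ m → e (i + d) ≤ e i := by
      intro d
      induction d with
      | zero => intro i _; simp
      | succ d ih =>
        intro i h
        have h1 : i + (d + 1) = (i + d) + 1 := by omega
        rw [h1]
        exact le_trans (hestep (i + d) (by omega)) (ih i (by omega))
    intro i j hij hjm
    have : j = i + (j - i) := by omega
    rw [this]
    exact key (j - i) i (by omega)
  have hkey1 : m * e 0 = (n - m) * e 1 := by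
    have hx : n - m - 1 + 1 = n - m := by omega
    have hy : m - 1 + 1 = m := by omega
    have h := Nat.add_one_mul_choose_eq (n - m - 1) (m - 1)
    have h2 : e 1 = Nat.choose (n - m - 1) (m - 1) := by simp [he]
    rw [he0, h2]
    calc m * Nat.choose (n - m) m = Nat.choose (n - m) m * m := by ring
    _ = Nat.choose (n - m - 1 + 1) (m - 1 + 1) * (m - 1 + 1) := by rw [hx, hy]
    _ = (n - m - 1 + 1) * Nat.choose (n - m - 1) (m - 1) := by rw [← h]
    _ = (n - m) * Nat.choose (n - m - 1) (m - 1) := by rw [hx]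
  have hF5 : (N - 1) * e 1 ≤ e 0 := by
    have h1 : ((N - 1) * m) * e 1 ≤ (n - m) * e 1 := Nat.mul_le_mul_right _ hNm
    rw [← hkey1] at h1
    have h2 : m * ((N - 1) * e 1) ≤ m * e 0 := by
      calc m * ((N - 1) * e 1) = ((N - 1) * m) * e 1 := by ring
      _ ≤ m * e 0 := h1
    exact Nat.le_of_mul_le_mul_left h2 (by omega)
  have hF6 : 2 ≤ m → (N - 1) * ((N - 1) * e 2) ≤ e 0 := by
    intro hm2
    have hkey2 : (m - 1) * e 1 = (n - m - 1) * e 2 := by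
      have hx : n - m - 2 + 1 = n - m - 1 := by omega
      have hy : m - 2 + 1 = m - 1 := by omega
      have h := Nat.add_one_mul_choose_eq (n - m - 2) (m - 2)
      have h2 : e 1 = Nat.choose (n - m - 1) (m - 1) := by simp [he]
      have h3 : e 2 = Nat.choose (n - m - 2) (m - 2) := by simp [he]
      rw [h2, h3]
      calc (m - 1) * Nat.choose (n - m - 1) (m - 1)
          = Nat.choose (n - m - 2 + 1) (m - 2 + 1) * (m - 2 + 1) := by rw [hx, hy]; ring
      _ = (n - m - 2 + 1) * Nat.choose (n - m - 2) (m - 2) := by rw [← h]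
      _ = (n - m - 1) * Nat.choose (n - m - 2) (m - 2) := by rw [hx]
    have hNm1 : (N - 1) * (m - 1) ≤ n - m - 1 := by
      have h1 : (N - 1) * (m - 1) + (N - 1) * 1 = (N - 1) * m := by
        rw [← Nat.mul_add]; congr 1; omega
      omega
    have hmid : (N - 1) * e 2 ≤ e 1 := by
      have h1 : ((N - 1) * (m - 1)) * e 2 ≤ (n - m - 1) * e 2 := Nat.mul_le_mul_right _ hNm1
      rw [← hkey2] at h1
      have h2 : (m - 1) * ((N - 1) * e 2) ≤ (m - 1) * e 1 := by
        calc (m - 1) * ((N - 1) * e 2) = ((N - 1) * (m - 1)) * e 2 := by ring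
        _ ≤ (m - 1) * e 1 := h1
      exact Nat.le_of_mul_le_mul_left h2 (by omega)
    calc (N - 1) * ((N - 1) * e 2) ≤ (N - 1) * e 1 := Nat.mul_le_mul_left _ hmid
    _ ≤ e 0 := hF5
  have heR : ∀ i, i ≤ m → (0 : ℝ) < (e i : ℝ) := fun i hi => by exact_mod_cast hepos i hi
  have hNcast : ((N - 1 : ℕ) : ℝ) = (N : ℝ) - 1 := by
    have h1 : (1 : ℕ) ≤ N := by omega
    rw [Nat.cast_sub h1, Nat.cast_one]
  have hF5R : ((N : ℝ) - 1) * (e 1 : ℝ) ≤ (e 0 : ℝ) := by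
    have h := (Nat.cast_le (α := ℝ)).mpr hF5
    rwa [Nat.cast_mul, hNcast] at h
  have hF6R : 2 ≤ m → ((N : ℝ) - 1) * (((N : ℝ) - 1) * (e 2 : ℝ)) ≤ (e 0 : ℝ) := by
    intro hm2
    have h := (Nat.cast_le (α := ℝ)).mpr (hF6 hm2)
    rwa [Nat.cast_mul, Nat.cast_mul, hNcast] at h
  -- master equation summed over supersets of Z
  have master_w : ∀ (j : Fin N) (Z : Finset (Fin n)), Z.card ≤ m →
      c * (e 0 : ℝ) * ew m (u j) Z
        = (e Z.card : ℝ) * ∑ k ∈ (univ : Finset (Fin N)).erase j, ev m (u k) Z := by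
    intro j Z hZm
    have lhs_eq : c * (e 0 : ℝ) * ew m (u j) Z
        = ∑ S ∈ (powersetCard m (univ : Finset (Fin n))).filter (fun S => Z ⊆ S),
            c * (e 0 : ℝ) * u j S := by
      rw [ew, mul_sum]
    rw [lhs_eq]
    have step1 : ∀ S ∈ (powersetCard m (univ : Finset (Fin n))).filter (fun S => Z ⊆ S),
        c * (e 0 : ℝ) * u j S
          = ∑ k ∈ (univ : Finset (Fin N)).erase j, ∑ T ∈ powersetCard m Sᶜ, u k T := by
      intro S hS
      rw [mem_filter] at hS
      rw [he0]
      exact hmaster j S hS.1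
    rw [sum_congr rfl step1, sum_comm, mul_sum]
    refine sum_congr rfl fun k _ => ?_
    calc ∑ S ∈ (powersetCard m (univ : Finset (Fin n))).filter (fun S => Z ⊆ S),
            ∑ T ∈ powersetCard m Sᶜ, u k T
        = ∑ S ∈ (powersetCard m (univ : Finset (Fin n))).filter (fun S => Z ⊆ S),
            ∑ T ∈ powersetCard m (univ : Finset (Fin n)),
              (if Disjoint T S then u k T else 0) := by
          refine sum_congr rfl fun S _ => ?_
          rw [pcard_compl_eq_filter S, sum_filter]
    _ = ∑ T ∈ powersetCard m (univ : Finset (Fin n)),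
          ∑ S ∈ (powersetCard m (univ : Finset (Fin n))).filter (fun S => Z ⊆ S),
            (if Disjoint T S then u k T else 0) := sum_comm
    _ = ∑ T ∈ powersetCard m (univ : Finset (Fin n)),
          (((powersetCard m (univ : Finset (Fin n))).filter
            (fun S => Z ⊆ S ∧ Disjoint T S)).card : ℝ) * u k T := by
          refine sum_congr rfl fun T _ => ?_
          rw [← sum_filter, filter_filter, sum_const, nsmul_eq_mul]
    _ = ∑ T ∈ powersetCard m (univ : Finset (Fin n)),
          (if Disjoint T Z then ((e Z.card : ℝ)) * u k T else 0) := by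
          refine sum_congr rfl fun T hT => ?_
          rw [mem_powersetCard] at hT
          by_cases hd : Disjoint T Z
          · rw [if_pos hd, count_supersets_disjoint hZm hT.2 hd.symm]
          · rw [if_neg hd, count_supersets_zero (fun hc' => hd hc'.symm), Nat.cast_zero, zero_mul]
    _ = (e Z.card : ℝ) * ev m (u k) Z := by
          rw [ev, mul_sum, ← sum_filter]
  -- master equation summed over j
  have master_sum : ∀ (Z : Finset (Fin n)), Z.card ≤ m →
      c * (e 0 : ℝ) * (∑ j, ew m (u j) Z)
        = (e Z.card : ℝ) * (((N : ℝ) - 1) * (∑ j, ev m (u j) Z)) := by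
    intro Z hZm
    have h1 : ∀ j : Fin N, ∑ k ∈ (univ : Finset (Fin N)).erase j, ev m (u k) Z
        = (∑ k, ev m (u k) Z) - ev m (u j) Z :=
      fun j => sum_erase_eq_sub (mem_univ j)
    calc c * (e 0 : ℝ) * (∑ j, ew m (u j) Z) = ∑ j, c * (e 0 : ℝ) * ew m (u j) Z := by
          rw [mul_sum]
    _ = ∑ j : Fin N, (e Z.card : ℝ) * ((∑ k, ev m (u k) Z) - ev m (u j) Z) := by
          refine sum_congr rfl fun j _ => ?_
          rw [master_w j Z hZm, h1 j]
    _ = (e Z.card : ℝ) * (((N : ℝ) - 1) * (∑ j, ev m (u j) Z)) := by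
          rw [← mul_sum, sum_sub_distrib, sum_const, card_univ, Fintype.card_fin, nsmul_eq_mul]
          ring
  have hw_empty : ∀ j, ew m (u j) ∅ = 0 := by
    intro j
    rw [ew_empty, hmean j]
  have hSV_moeb : ∀ Z : Finset (Fin n),
      (∑ j, ev m (u j) Z) = ∑ Y ∈ Z.powerset, (-1 : ℝ) ^ Y.card * (∑ j, ew m (u j) Y) := by
    intro Z
    rw [sum_congr rfl fun j (_ : j ∈ univ) => ev_eq_moebius (u j) Z, sum_comm]
    exact sum_congr rfl fun Y _ => by rw [mul_sum]
  by_cases hSWzero : ∀ Z : Finset (Fin n), (∑ j, ew m (u j) Z) = 0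
  · -- CASE B : the total superset-sums vanish identically
    obtain ⟨j, S, hSmem, hu⟩ := hnt
    have hwjS : ew m (u j) S ≠ 0 := by
      rw [ew_level_m (u j) hSmem]
      exact hu
    obtain ⟨Z₀, hZ₀, hmin⟩ := exists_min_support ⟨S, hwjS⟩
    have hi₀m : Z₀.card ≤ m := by
      by_contra h
      exact hZ₀ (ew_zero_of_lt (u j) (by omega))
    have hi₀1 : 1 ≤ Z₀.card := by
      rcases Nat.eq_zero_or_pos Z₀.card with h | h
      · exfalso
        rw [card_eq_zero] at h
        rw [h] at hZ₀
        exact hZ₀ (hw_empty j)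
      · omega
    have hvj : ev m (u j) Z₀ = (-1 : ℝ) ^ Z₀.card * ew m (u j) Z₀ := by
      rw [ev_eq_moebius (u j) Z₀, moebius_collapse hmin]
    have hSVZ : (∑ k, ev m (u k) Z₀) = 0 := by
      rw [hSV_moeb Z₀]
      refine sum_eq_zero fun Y _ => ?_
      rw [hSWzero Y, mul_zero]
    have heq := master_w j Z₀ hi₀m
    rw [sum_erase_eq_sub (mem_univ j), hSVZ, hvj] at heq
    have heq2 : (c * (e 0 : ℝ) + (e Z₀.card : ℝ) * (-1 : ℝ) ^ Z₀.card) * ew m (u j) Z₀ = 0 := by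
      rw [add_mul, heq]
      ring
    have heq3 : c * (e 0 : ℝ) = - ((-1 : ℝ) ^ Z₀.card * (e Z₀.card : ℝ)) := by
      rcases mul_eq_zero.mp heq2 with h | h
      · linarith [h]
      · exact absurd h hZ₀
    rcases Nat.even_or_odd Z₀.card with hpar | hpar
    · rw [hpar.neg_one_pow, one_mul] at heq3
      have h1 : (0 : ℝ) < c * (e 0 : ℝ) := mul_pos hcpos (heR 0 (by omega))
      have h2 : (0 : ℝ) < (e Z₀.card : ℝ) := heR _ hi₀m
      linarith
    · rw [hpar.neg_one_pow] at heq3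
      have heq4 : c * (e 0 : ℝ) = (e Z₀.card : ℝ) := by linarith
      have h1 : (e Z₀.card : ℝ) ≤ (e 1 : ℝ) := by
        exact_mod_cast heanti 1 Z₀.card hi₀1 hi₀m
      have h4 : (0 : ℝ) < (N : ℝ) - 1 := by linarith
      have h3 : (e 0 : ℝ) < ((N : ℝ) - 1) * (c * (e 0 : ℝ)) := by
        nlinarith [heR 0 (Nat.zero_le m)]
      have h5 : ((N : ℝ) - 1) * (e Z₀.card : ℝ) ≤ ((N : ℝ) - 1) * (e 1 : ℝ) := by
        nlinarith
      have h6 : ((N : ℝ) - 1) * (c * (e 0 : ℝ)) = ((N : ℝ) - 1) * (e Z₀.card : ℝ) := by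
        rw [heq4]
      linarith
  · -- CASE A : the total superset-sums do not vanish
    push_neg at hSWzero
    obtain ⟨Z₀, hZ₀, hmin⟩ := exists_min_support hSWzero
    have hi₀m : Z₀.card ≤ m := by
      by_contra h
      apply hZ₀
      exact sum_eq_zero fun j _ => ew_zero_of_lt (u j) (by omega)
    have hi₀1 : 1 ≤ Z₀.card := by
      rcases Nat.eq_zero_or_pos Z₀.card with h | h
      · exfalso
        rw [card_eq_zero] at h
        apply hZ₀
        rw [h]
        exact sum_eq_zero fun j _ => hw_empty j
      · omega
    have hSVZ : (∑ k, ev m (u k) Z₀) = (-1 : ℝ) ^ Z₀.card * (∑ j, ew m (u j) Z₀) := by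
      rw [hSV_moeb Z₀, moebius_collapse hmin]
    have heq := master_sum Z₀ hi₀m
    rw [hSVZ] at heq
    have heq3 : c * (e 0 : ℝ)
        = ((N : ℝ) - 1) * ((-1 : ℝ) ^ Z₀.card * (e Z₀.card : ℝ)) := by
      have h0 : (c * (e 0 : ℝ)
          - ((N : ℝ) - 1) * ((-1 : ℝ) ^ Z₀.card * (e Z₀.card : ℝ))) * (∑ j, ew m (u j) Z₀)
          = 0 := by
        rw [sub_mul, heq]
        ring
      rcases mul_eq_zero.mp h0 with h | h
      · linarith [h]
      · exact absurd h hZ₀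
    have h4 : (0 : ℝ) < (N : ℝ) - 1 := by linarith
    rcases Nat.even_or_odd Z₀.card with hpar | hpar
    · rw [hpar.neg_one_pow, one_mul] at heq3
      have hi₀2 : 2 ≤ Z₀.card := by
        rcases hpar with ⟨t, ht⟩
        omega
      have hm2 : 2 ≤ m := le_trans hi₀2 hi₀m
      have h1 : (e Z₀.card : ℝ) ≤ (e 2 : ℝ) := by
        exact_mod_cast heanti 2 Z₀.card hi₀2 hi₀m
      have h2 := hF6R hm2
      have h5 : (e 0 : ℝ) < ((N : ℝ) - 1) * (c * (e 0 : ℝ)) := by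
        nlinarith [heR 0 (Nat.zero_le m)]
      have h6 : ((N : ℝ) - 1) * (c * (e 0 : ℝ))
          = ((N : ℝ) - 1) * (((N : ℝ) - 1) * (e Z₀.card : ℝ)) := by
        rw [heq3]
      have h7 : ((N : ℝ) - 1) * (((N : ℝ) - 1) * (e Z₀.card : ℝ))
          ≤ ((N : ℝ) - 1) * (((N : ℝ) - 1) * (e 2 : ℝ)) :=
        mul_le_mul_of_nonneg_left (mul_le_mul_of_nonneg_left h1 (le_of_lt h4)) (le_of_lt h4)
      linarith
    · rw [hpar.neg_one_pow] at heq3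
      have h1 : (0 : ℝ) < c * (e 0 : ℝ) := mul_pos hcpos (heR 0 (by omega))
      have h2 : (0 : ℝ) < (e Z₀.card : ℝ) := heR _ hi₀m
      nlinarith

lemma Eop_sum_comm (a : Fin N → ℕ) (ha : ∀ k, a k + m ≤ n) (j : Fin N)
    {ι : Type*} (s : Finset ι) (g : ι → Equiv.Perm (Fin n) → ℝ) (σ : Equiv.Perm (Fin n)) :
    Eop a ha j (fun σ' => ∑ i ∈ s, g i σ') σ = ∑ i ∈ s, Eop a ha j (g i) σ := by
  unfold Eop
  rw [Finset.sum_comm, sum_div]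

lemma Eop_const_mul (a : Fin N → ℕ) (ha : ∀ k, a k + m ≤ n) (j : Fin N)
    (r : ℝ) (g : Equiv.Perm (Fin n) → ℝ) (σ : Equiv.Perm (Fin n)) :
    Eop a ha j (fun σ' => r * g σ') σ = r * Eop a ha j g σ := by
  unfold Eop
  rw [← mul_sum, mul_div_assoc]

end OSPG

open OSPG

/-- The symmetric Markov kernel `P f (σ) = (1/N) Σ_k ν[f | η = σ on I_k]`, where
`I_k` is the `m`-block with left endpoint `a k` and `ν` is the uniform measure on
permutations of `n` letters. -/
noncomputable def Pop (n m N : ℕ) (a : Fin N → ℕ) (ha : ∀ k, a k + m ≤ n)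
    (f : Equiv.Perm (Fin n) → ℝ) (σ : Equiv.Perm (Fin n)) : ℝ :=
  (1 / N) * ∑ k : Fin N,
    (∑ η ∈ blockFix n m (a k) (ha k) σ, f η) / ((blockFix n m (a k) (ha k) σ).card : ℝ)

/-- for `N ≥ 2`, `m ≥ 1`, `N·m ≤ n` and `N` pairwise disjoint `m`-blocks,
every nonzero eigenvalue of `1 − P` is at least `(N−2)/(N−1)`; that is, the lowest
nonzero eigenvalue `μ` of `1 − P` satisfies `μ ≥ (N−2)/(N−1)`. -/
theorem one_sub_Pop_gap (n m N : ℕ) (hN : 2 ≤ N) (hm : 1 ≤ m) (hmn : N * m ≤ n)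
    (a : Fin N → ℕ) (ha : ∀ k, a k + m ≤ n)
    (hdisj : ∀ k k' : Fin N, k ≠ k' → ∀ t t' : ℕ, t < m → t' < m → a k + t ≠ a k' + t')
    (lam : ℝ) (hlam : lam ≠ 0) (f : Equiv.Perm (Fin n) → ℝ) (hf : f ≠ 0)
    (heig : ∀ σ, f σ - Pop n m N a ha f σ = lam * f σ) :
    (N - 2 : ℝ) / (N - 1 : ℝ) ≤ lam := by
  classical
  by_contra hlt
  push_neg at hlt
  have hNR : (2 : ℝ) ≤ (N : ℝ) := by exact_mod_cast hN
  have hN1 : (0 : ℝ) < (N : ℝ) - 1 := by linarith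
  have hN0 : (N : ℝ) ≠ 0 := by positivity
  set β : ℝ := 1 - lam with hβdef
  have hβ : 1 / ((N : ℝ) - 1) < β := by
    have h1 : ((N : ℝ) - 2) / ((N : ℝ) - 1) = 1 - 1 / ((N : ℝ) - 1) := by
      field_simp
      ring
    rw [h1] at hlt
    simp only [hβdef]
    linarith
  have hβpos : 0 < β := lt_trans (by positivity) hβ
  set θ : ℝ := (N : ℝ) * β - 1 with hθdef
  have hθc : 1 < ((N : ℝ) - 1) * θ := by
    have h1 : ((N : ℝ) - 1) * (1 / ((N : ℝ) - 1)) = 1 := by field_simp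
    have h3 : 1 < ((N : ℝ) - 1) * β := by
      calc (1 : ℝ) = ((N : ℝ) - 1) * (1 / ((N : ℝ) - 1)) := h1.symm
      _ < ((N : ℝ) - 1) * β := mul_lt_mul_of_pos_left hβ hN1
    have hNpos : (0 : ℝ) < (N : ℝ) := by positivity
    nlinarith [mul_lt_mul_of_pos_left h3 hNpos]
  have hθpos : 0 < θ := by nlinarith
  -- the eigenvalue equation, rewritten
  have hP : ∀ σ, ∑ k, Eop a ha k f σ = (N : ℝ) * (β * f σ) := by
    intro σ
    have h1 : Pop n m N a ha f σ = (1 / (N : ℝ)) * ∑ k, Eop a ha k f σ := rfl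
    have h2 := heig σ
    rw [h1] at h2
    have h3 : (1 / (N : ℝ)) * ∑ k, Eop a ha k f σ = β * f σ := by
      simp only [hβdef]; linarith
    calc ∑ k, Eop a ha k f σ = (N : ℝ) * ((1 / (N : ℝ)) * ∑ k, Eop a ha k f σ) := by
          field_simp
    _ = (N : ℝ) * (β * f σ) := by rw [h3]
  -- f sums to zero
  have hsumf : ∑ σ : Equiv.Perm (Fin n), f σ = 0 := by
    have h1 : ∑ σ : Equiv.Perm (Fin n), (∑ k, Eop a ha k f σ)
        = (N : ℝ) * ∑ σ : Equiv.Perm (Fin n), f σ := by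
      rw [Finset.sum_comm]
      rw [sum_congr rfl fun k (_ : k ∈ univ) => sum_Eop a ha k f, sum_const, card_univ,
        Fintype.card_fin, nsmul_eq_mul]
    have h2 : ∑ σ : Equiv.Perm (Fin n), (∑ k, Eop a ha k f σ)
        = (N : ℝ) * (β * ∑ σ : Equiv.Perm (Fin n), f σ) := by
      rw [sum_congr rfl fun σ (_ : σ ∈ univ) => hP σ, ← mul_sum, ← mul_sum]
    have h3 : (N : ℝ) * ∑ σ : Equiv.Perm (Fin n), f σ
        = (N : ℝ) * (β * ∑ σ : Equiv.Perm (Fin n), f σ) := by rw [← h1, h2]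
    have h4 : lam * ∑ σ : Equiv.Perm (Fin n), f σ = 0 := by
      have : (N : ℝ) * (lam * ∑ σ : Equiv.Perm (Fin n), f σ) = 0 := by
        simp only [hβdef] at h3
        ring_nf at h3 ⊢
        linarith
      rcases mul_eq_zero.mp this with h | h
      · exact absurd h hN0
      · exact h
    rcases mul_eq_zero.mp h4 with h | h
    · exact absurd h hlam
    · exact h
  -- the projected eigenvalue equation (†)
  have hdagger : ∀ (j : Fin N) (σ : Equiv.Perm (Fin n)),
      ∑ k ∈ (univ : Finset (Fin N)).erase j, Eop a ha j (Eop a ha k f) σ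
        = θ * Eop a ha j f σ := by
    intro j σ
    have h1 : (fun σ' => ∑ k, Eop a ha k f σ') = (fun σ' => (N : ℝ) * (β * f σ')) :=
      funext hP
    have h2 : ∑ k, Eop a ha j (Eop a ha k f) σ = (N : ℝ) * β * Eop a ha j f σ := by
      rw [← Eop_sum_comm a ha j univ (fun k => Eop a ha k f) σ, h1]
      rw [Eop_const_mul a ha j ((N : ℝ)) (fun σ' => β * f σ') σ,
        Eop_const_mul a ha j β f σ]
      ring
    have h3 : ∑ k ∈ (univ : Finset (Fin N)).erase j, Eop a ha j (Eop a ha k f) σ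
        = (∑ k, Eop a ha j (Eop a ha k f) σ) - Eop a ha j (Eop a ha j f) σ :=
      sum_erase_eq_sub (mem_univ j)
    rw [h3, h2, Eop_Eop a ha j f σ, hθdef]
    ring
  -- set-measurability of Eop j f
  have hinv : ∀ (j : Fin N) (σ σ' : Equiv.Perm (Fin n)),
      img a ha j σ = img a ha j σ' → Eop a ha j f σ = Eop a ha j f σ' := by
    intro j σ σ' himgeq
    have h1 : ∀ k ∈ (univ : Finset (Fin N)).erase j,
        Eop a ha j (Eop a ha k f) σ = Eop a ha j (Eop a ha k f) σ' := by
      intro k hk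
      have hkj : k ≠ j := (mem_erase.mp hk).1
      exact Eop_img_invariant a ha hdisj (Ne.symm hkj) (Eop a ha k f)
        (fun σ₀ η h => Eop_congr a ha k f h) himgeq
    have h2 := hdagger j σ
    have h3 := hdagger j σ'
    rw [sum_congr rfl h1, h3] at h2
    exact mul_left_cancel₀ (ne_of_gt hθpos) h2.symm
  -- the set-level function u
  set u : Fin N → Finset (Fin n) → ℝ := fun j S =>
    if h : ∃ σ : Equiv.Perm (Fin n), img a ha j σ = S then Eop a ha j f h.choose else 0
    with hudef
  have hu : ∀ (j : Fin N) (σ : Equiv.Perm (Fin n)),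
      u j (img a ha j σ) = Eop a ha j f σ := by
    intro j σ
    have hex : ∃ σ' : Equiv.Perm (Fin n), img a ha j σ' = img a ha j σ := ⟨σ, rfl⟩
    simp only [hudef, dif_pos hex]
    exact hinv j hex.choose σ hex.choose_spec
  -- the master equation (‡)
  have h2mn : 2 * m ≤ n := le_trans (Nat.mul_le_mul_right m hN) hmn
  have hDpos : 0 < Nat.choose (n - m) m := Nat.choose_pos (by omega)
  have hmaster : ∀ j : Fin N, ∀ S ∈ powersetCard m (univ : Finset (Fin n)),
      θ * (Nat.choose (n - m) m : ℝ) * u j S =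
        ∑ k ∈ (univ : Finset (Fin N)).erase j, ∑ T ∈ powersetCard m Sᶜ, u k T := by
    intro j S hS
    obtain ⟨σ, hσ⟩ := exists_img_eq a ha j hS
    have hcardSc : ((powersetCard m Sᶜ).card : ℝ) = (Nat.choose (n - m) m : ℝ) := by
      rw [card_powersetCard, card_compl, Fintype.card_fin, (mem_powersetCard.mp hS).2]
    have hujS : u j S = Eop a ha j f σ := by rw [← hσ, hu]
    have hstep : ∀ k ∈ (univ : Finset (Fin N)).erase j,
        Eop a ha j (Eop a ha k f) σ
          = (∑ T ∈ powersetCard m Sᶜ, u k T) / (Nat.choose (n - m) m : ℝ) := by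
      intro k hk
      have hkj : k ≠ j := (mem_erase.mp hk).1
      have hfun : Eop a ha k f = fun η => u k (img a ha k η) := by
        funext η
        rw [hu]
      rw [hfun, Eop_of_img_fn a ha hN hmn hdisj (Ne.symm hkj) (u k) σ, hσ, hcardSc]
    have h2 := hdagger j σ
    rw [sum_congr rfl hstep, ← sum_div] at h2
    have hD0 : ((Nat.choose (n - m) m : ℕ) : ℝ) ≠ 0 := by exact_mod_cast hDpos.ne'
    rw [div_eq_iff hD0] at h2
    rw [hujS, h2]
    ring
  -- mean zero
  have hmean : ∀ j, ∑ S ∈ powersetCard m (univ : Finset (Fin n)), u j S = 0 := by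
    intro j
    obtain ⟨cj, hcjpos, hcj⟩ := sum_perm_img a ha j (u j)
    have h1 : ∑ σ : Equiv.Perm (Fin n), u j (img a ha j σ)
        = ∑ σ : Equiv.Perm (Fin n), Eop a ha j f σ :=
      sum_congr rfl fun σ _ => hu j σ
    rw [sum_Eop a ha j f, hsumf] at h1
    rw [h1] at hcj
    have hcj0 : (cj : ℝ) ≠ 0 := by exact_mod_cast hcjpos.ne'
    rcases mul_eq_zero.mp hcj.symm with h | h
    · exact absurd h hcj0
    · exact h
  -- nontriviality
  have hnt : ∃ j, ∃ S ∈ powersetCard m (univ : Finset (Fin n)), u j S ≠ 0 := by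
    by_contra hall
    push_neg at hall
    apply hf
    funext σ
    have h1 : ∀ k : Fin N, Eop a ha k f σ = 0 := by
      intro k
      rw [← hu k σ]
      exact hall k (img a ha k σ) (img_mem_powersetCard a ha k σ)
    have h2 := hP σ
    rw [sum_eq_zero fun k _ => h1 k] at h2
    have h3 : β * f σ = 0 := by
      rcases mul_eq_zero.mp h2.symm with h | h
      · exact absurd h hN0
      · exact h
    rcases mul_eq_zero.mp h3 with h | h
    · exact absurd h (ne_of_gt hβpos)
    · exact h
  exact endgame hN hm hmn u θ hθc hmaster hmean hnt
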